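/- For every integer k ≥ 1, the second-order coefficient of the equal-truncation generalized Hessian operator equals 1: (1/2)[2 ∑_{m=1}^k (-1)^{2-m} (∑_{j=1}^k 1/j) C(k,m) m + ∑_{l=1}^k ∑_{m=1}^k (-1)^{2-l-m} C(k,l) C(k,m) (l+m)^2/(l·m)] = 1. -/

import Mathlib

open Finset

private lemma inv_pow_neg_one (m : ℕ) : ((-1:ℚ) ^ m)⁻¹ = (-1:ℚ) ^ m := by
  rw [← inv_pow]; norm_num

private lemma zpow_two_sub (m : ℕ) : (-1:ℚ) ^ ((2:ℤ) - (m:ℤ)) = (-1:ℚ) ^ m := by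
  rw [show (2:ℤ) - (m:ℤ) = 2 + (-(m:ℤ)) by ring, zpow_add₀ (by norm_num : (-1:ℚ) ≠ 0),
    zpow_neg, zpow_natCast, inv_pow_neg_one]
  norm_num

private lemma zpow_two_sub_sub (l m : ℕ) :
    (-1:ℚ) ^ ((2:ℤ) - (l:ℤ) - (m:ℤ)) = (-1:ℚ) ^ l * (-1:ℚ) ^ m := by
  rw [show (2:ℤ) - (l:ℤ) - (m:ℤ) = 2 + (-(l:ℤ)) + (-(m:ℤ)) by ring,
    zpow_add₀ (by norm_num : (-1:ℚ) ≠ 0), zpow_add₀ (by norm_num : (-1:ℚ) ≠ 0),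
    zpow_neg, zpow_neg, zpow_natCast, zpow_natCast, inv_pow_neg_one, inv_pow_neg_one]
  norm_num

private lemma altsum (k : ℕ) (hk : 1 ≤ k) :
    ∑ m ∈ Icc 1 k, (-1:ℚ) ^ m * (k.choose m : ℚ) = -1 := by
  have h0 : Finset.range (k+1) = insert 0 (Icc 1 k) := by
    ext x; simp only [Finset.mem_range, Finset.mem_insert, Finset.mem_Icc]; omega
  have h := Int.alternating_sum_range_choose (n := k)
  rw [if_neg (by omega)] at h
  have hq : ∑ m ∈ Finset.range (k+1), (-1:ℚ) ^ m * (k.choose m : ℚ) = 0 := by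
    have := congrArg (fun z : ℤ => (z:ℚ)) h
    push_cast at this
    simpa using this
  rw [h0, Finset.sum_insert (by simp)] at hq
  simp only [pow_zero, Nat.choose_zero_right, Nat.cast_one, one_mul] at hq
  linarith

private lemma sumB (k : ℕ) (hk : 1 ≤ k) :
    ∑ m ∈ Icc 1 k, (-1:ℚ) ^ m * (k.choose m : ℚ) / m
      = -∑ j ∈ Icc 1 k, (1:ℚ) / j := by
  induction k, hk using Nat.le_induction with
  | base => norm_num
  | succ n hn ih =>
    have hsplit : ∀ m ∈ Icc 1 (n+1), (-1:ℚ) ^ m * ((n+1).choose m : ℚ) / m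
        = (-1:ℚ) ^ m * (n.choose m : ℚ) / m + (-1:ℚ) ^ m * (n.choose (m-1) : ℚ) / m := by
      intro m hm
      simp only [Finset.mem_Icc] at hm
      obtain ⟨j, rfl⟩ : ∃ j, m = j + 1 := ⟨m - 1, by omega⟩
      rw [Nat.choose_succ_succ']
      push_cast
      ring
    rw [Finset.sum_congr rfl hsplit, Finset.sum_add_distrib]
    have hS1 : ∑ m ∈ Icc 1 (n+1), (-1:ℚ) ^ m * (n.choose m : ℚ) / m
        = -∑ j ∈ Icc 1 n, (1:ℚ) / j := by
      rw [Finset.sum_Icc_succ_top (by omega), Nat.choose_succ_self]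
      simpa [one_div] using ih
    have hS2 : ∑ m ∈ Icc 1 (n+1), (-1:ℚ) ^ m * (n.choose (m-1) : ℚ) / m
        = -(1 / ((n:ℚ) + 1)) := by
      have hterm : ∀ m ∈ Icc 1 (n+1), (-1:ℚ) ^ m * (n.choose (m-1) : ℚ) / m
          = (1 / ((n:ℚ) + 1)) * ((-1:ℚ) ^ m * ((n+1).choose m : ℚ)) := by
        intro m hm
        simp only [Finset.mem_Icc] at hm
        obtain ⟨j, rfl⟩ : ∃ j, m = j + 1 := ⟨m - 1, by omega⟩
        have hc : (n + 1) * n.choose j = (n+1).choose (j+1) * (j+1) := by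
          simpa [Nat.add_one_mul_choose_eq] using (Nat.add_one_mul_choose_eq n j)
        have hcq : ((n:ℚ) + 1) * (n.choose j : ℚ) = ((n+1).choose (j+1) : ℚ) * ((j:ℚ)+1) := by
          exact_mod_cast congrArg (fun z : ℕ => (z:ℚ)) hc
        have hj : ((j:ℚ) + 1) ≠ 0 := by positivity
        have hn1 : ((n:ℚ) + 1) ≠ 0 := by positivity
        simp only [Nat.add_sub_cancel]
        have key : (n.choose j : ℚ) / ((j:ℚ)+1) = ((n+1).choose (j+1) : ℚ) / ((n:ℚ)+1) := by
          rw [div_eq_div_iff hj hn1]; linarith [hcq]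
        push_cast
        rw [mul_div_assoc, key]
        ring
      rw [Finset.sum_congr rfl hterm, ← Finset.mul_sum, altsum (n+1) (by omega)]
      ring
    rw [hS1, hS2, Finset.sum_Icc_succ_top (show 1 ≤ n+1 by omega)]
    push_cast
    ring

theorem stmt5 (k : ℕ) (hk : 1 ≤ k) :
    (1 / 2 : ℚ) *
      (2 * ∑ m ∈ Finset.Icc 1 k, (-1 : ℚ) ^ ((2 : ℤ) - (m : ℤ))
          * (∑ j ∈ Finset.Icc 1 k, (1 : ℚ) / (j : ℚ)) * (k.choose m : ℚ) * (m : ℚ)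
        + ∑ l ∈ Finset.Icc 1 k, ∑ m ∈ Finset.Icc 1 k,
            (-1 : ℚ) ^ ((2 : ℤ) - (l : ℤ) - (m : ℤ))
              * (k.choose l : ℚ) * (k.choose m : ℚ)
              * ((l : ℚ) + (m : ℚ)) ^ 2 / ((l : ℚ) * (m : ℚ))) = 1 := by
  set H : ℚ := ∑ j ∈ Icc 1 k, (1:ℚ) / j with hH
  set A : ℚ := ∑ m ∈ Icc 1 k, (-1:ℚ) ^ m * (k.choose m : ℚ) * m with hA
  have hB := sumB k hk
  have hC := altsum k hk
  have h1 : ∑ m ∈ Icc 1 k, (-1 : ℚ) ^ ((2 : ℤ) - (m : ℤ)) * H * (k.choose m : ℚ) * m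
      = A * H := by
    rw [hA, Finset.sum_mul]
    refine Finset.sum_congr rfl fun m _ => ?_
    rw [zpow_two_sub]; ring
  have h2 : ∑ l ∈ Icc 1 k, ∑ m ∈ Icc 1 k,
      (-1 : ℚ) ^ ((2 : ℤ) - (l : ℤ) - (m : ℤ)) * (k.choose l : ℚ) * (k.choose m : ℚ)
        * ((l : ℚ) + (m : ℚ)) ^ 2 / ((l : ℚ) * (m : ℚ))
      = A * (-H) + (-H) * A + 2 * ((-1:ℚ) * (-1:ℚ)) := by
    have hterm : ∀ l ∈ Icc 1 k, ∀ m ∈ Icc 1 k,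
        (-1 : ℚ) ^ ((2 : ℤ) - (l : ℤ) - (m : ℤ)) * (k.choose l : ℚ) * (k.choose m : ℚ)
          * ((l : ℚ) + (m : ℚ)) ^ 2 / ((l : ℚ) * (m : ℚ))
        = ((-1:ℚ)^l * (k.choose l : ℚ) * l) * ((-1:ℚ)^m * (k.choose m : ℚ) / m)
          + ((-1:ℚ)^l * (k.choose l : ℚ) / l) * ((-1:ℚ)^m * (k.choose m : ℚ) * m)
          + 2 * (((-1:ℚ)^l * (k.choose l : ℚ)) * ((-1:ℚ)^m * (k.choose m : ℚ))) := by
      intro l hl m hm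
      simp only [Finset.mem_Icc] at hl hm
      have hl0 : ((l:ℚ)) ≠ 0 := by
        have : (0:ℚ) < l := by exact_mod_cast Nat.lt_of_lt_of_le Nat.zero_lt_one hl.1
        linarith
      have hm0 : ((m:ℚ)) ≠ 0 := by
        have : (0:ℚ) < m := by exact_mod_cast Nat.lt_of_lt_of_le Nat.zero_lt_one hm.1
        linarith
      rw [zpow_two_sub_sub]
      field_simp
      ring
    calc ∑ l ∈ Icc 1 k, ∑ m ∈ Icc 1 k,
          (-1 : ℚ) ^ ((2 : ℤ) - (l : ℤ) - (m : ℤ)) * (k.choose l : ℚ) * (k.choose m : ℚ)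
            * ((l : ℚ) + (m : ℚ)) ^ 2 / ((l : ℚ) * (m : ℚ))
        = ∑ l ∈ Icc 1 k, ∑ m ∈ Icc 1 k,
            (((-1:ℚ)^l * (k.choose l : ℚ) * l) * ((-1:ℚ)^m * (k.choose m : ℚ) / m)
            + ((-1:ℚ)^l * (k.choose l : ℚ) / l) * ((-1:ℚ)^m * (k.choose m : ℚ) * m)
            + 2 * (((-1:ℚ)^l * (k.choose l : ℚ)) * ((-1:ℚ)^m * (k.choose m : ℚ)))) := by
          exact Finset.sum_congr rfl fun l hl => Finset.sum_congr rfl (hterm l hl)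
      _ = A * (-H) + (-H) * A + 2 * ((-1:ℚ) * (-1:ℚ)) := by
          simp only [Finset.sum_add_distrib, ← Finset.sum_mul, ← Finset.mul_sum]
          rw [hB, hC, ← hA]
  rw [h1, h2]
  ring
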